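/- For all u > 0, σ > 0, T > 0 and r ≠ 0, it holds that ∫_0^T (u/(σ·√(2πθ)))·e^{−(u−rθ)²/(2σ²θ)} dθ = (u/r)·(Φ((−u+rT)/(σ√T)) − e^{2ur/σ²}·Φ((−u−rT)/(σ√T))). -/

import Mathlib

open MeasureTheory Real

/-- The standard normal cumulative distribution function `Φ`. -/
noncomputable def stdGaussianCDF (y : ℝ) : ℝ :=
  ∫ z in Set.Iic y, Real.exp (-z ^ 2 / 2) / Real.sqrt (2 * Real.pi)

noncomputable def stdPhi (z : ℝ) : ℝ := Real.exp (-z ^ 2 / 2) / Real.sqrt (2 * Real.pi)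

lemma stdPhi_cont : Continuous stdPhi := by
  unfold stdPhi; fun_prop

lemma stdPhi_nonneg (z : ℝ) : 0 ≤ stdPhi z :=
  div_nonneg (Real.exp_pos _).le (Real.sqrt_nonneg _)

lemma integrable_stdPhi : Integrable stdPhi := by
  have h : Integrable (fun x : ℝ => Real.exp (-(1/2) * x ^ 2)) volume :=
    integrable_exp_neg_mul_sq (by norm_num)
  have h2 := h.mul_const (Real.sqrt (2 * Real.pi))⁻¹
  refine h2.congr (Filter.Eventually.of_forall fun z => ?_)
  show Real.exp (-(1/2) * z ^ 2) * (Real.sqrt (2 * Real.pi))⁻¹ = stdPhi z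
  unfold stdPhi
  rw [div_eq_mul_inv]
  ring_nf

lemma stdGaussianCDF_eq (y : ℝ) : stdGaussianCDF y = ∫ z in Set.Iic y, stdPhi z := rfl

lemma hasDerivAt_stdGaussianCDF (y : ℝ) : HasDerivAt stdGaussianCDF (stdPhi y) y := by
  have key : ∀ x : ℝ, stdGaussianCDF x
      = (∫ z in Set.Iic 0, stdPhi z) + ∫ z in (0:ℝ)..x, stdPhi z := by
    intro x
    have h := intervalIntegral.integral_Iic_sub_Iic
      (μ := volume) (f := stdPhi) integrable_stdPhi.integrableOn integrable_stdPhi.integrableOn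
      (a := 0) (b := x)
    rw [stdGaussianCDF_eq]
    linarith [h]
  have h2 : HasDerivAt (fun x => (∫ z in Set.Iic 0, stdPhi z) + ∫ z in (0:ℝ)..x, stdPhi z)
      (stdPhi y) y := by
    refine HasDerivAt.const_add _ ?_
    exact intervalIntegral.integral_hasDerivAt_right
      integrable_stdPhi.intervalIntegrable
      stdPhi_cont.stronglyMeasurable.stronglyMeasurableAtFilter
      stdPhi_cont.continuousAt
  exact h2.congr_of_eventuallyEq (Filter.Eventually.of_forall fun x => (key x))

lemma continuous_stdGaussianCDF : Continuous stdGaussianCDF := by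
  have : Differentiable ℝ stdGaussianCDF := fun y => (hasDerivAt_stdGaussianCDF y).differentiableAt
  exact this.continuous

lemma stdGaussianCDF_nonneg (y : ℝ) : 0 ≤ stdGaussianCDF y :=
  setIntegral_nonneg measurableSet_Iic fun z _ => stdPhi_nonneg z

lemma stdGaussianCDF_tendsto_atBot : Filter.Tendsto stdGaussianCDF Filter.atBot (nhds 0) := by
  have hle : ∀ y : ℝ, y ≤ -2 →
      stdGaussianCDF y ≤ Real.exp y * (Real.sqrt (2 * Real.pi))⁻¹ := by
    intro y hy
    have hInt : IntegrableOn (fun z => Real.exp z * (Real.sqrt (2 * Real.pi))⁻¹)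
        (Set.Iic y) volume := (integrableOn_exp_Iic y).mul_const _
    have hb : ∀ z ∈ Set.Iic y, stdPhi z ≤ Real.exp z * (Real.sqrt (2 * Real.pi))⁻¹ := by
      intro z hz
      simp only [Set.mem_Iic] at hz
      have hz2 : z ≤ -2 := hz.trans hy
      have hzz : -z ^ 2 / 2 ≤ z := by nlinarith
      rw [stdPhi, div_eq_mul_inv]
      have := Real.exp_le_exp.2 hzz
      have h0 : (0:ℝ) ≤ (Real.sqrt (2 * Real.pi))⁻¹ := by positivity
      exact mul_le_mul_of_nonneg_right this h0
    calc stdGaussianCDF y ≤ ∫ z in Set.Iic y, Real.exp z * (Real.sqrt (2 * Real.pi))⁻¹ := by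
          rw [stdGaussianCDF_eq]
          exact setIntegral_mono_on integrable_stdPhi.integrableOn hInt measurableSet_Iic hb
      _ = Real.exp y * (Real.sqrt (2 * Real.pi))⁻¹ := by
          rw [integral_mul_const, integral_exp_Iic]
  have h1 : Filter.Tendsto (fun y => Real.exp y * (Real.sqrt (2 * Real.pi))⁻¹)
      Filter.atBot (nhds 0) := by
    simpa using Real.tendsto_exp_atBot.mul_const (Real.sqrt (2 * Real.pi))⁻¹
  refine tendsto_of_tendsto_of_tendsto_of_le_of_le' tendsto_const_nhds h1
    (Filter.Eventually.of_forall stdGaussianCDF_nonneg) ?_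
  filter_upwards [Filter.eventually_le_atBot (-2 : ℝ)] with y hy using hle y hy

/-- For `u > 0`, `σ > 0`, `T > 0` and `r ≠ 0`,
`∫_0^T (u/(σ√(2πθ)))·e^{−(u−rθ)²/(2σ²θ)} dθ
  = (u/r)·(Φ((−u+rT)/(σ√T)) − e^{2ur/σ²}·Φ((−u−rT)/(σ√T)))`. -/
theorem stmt_6 (u σ T r : ℝ) (hu : 0 < u) (hσ : 0 < σ) (hT : 0 < T) (hr : r ≠ 0) :
    ∫ θ in (0 : ℝ)..T,
        u / (σ * Real.sqrt (2 * Real.pi * θ)) *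
          Real.exp (-(u - r * θ) ^ 2 / (2 * σ ^ 2 * θ))
      = u / r * (stdGaussianCDF ((-u + r * T) / (σ * Real.sqrt T))
          - Real.exp (2 * u * r / σ ^ 2) *
            stdGaussianCDF ((-u - r * T) / (σ * Real.sqrt T))) := by
  set k : ℝ := Real.exp (2 * u * r / σ ^ 2) with hk
  set A : ℝ → ℝ := fun θ => (-u + r * θ) / (σ * Real.sqrt θ) with hA
  set B : ℝ → ℝ := fun θ => (-u - r * θ) / (σ * Real.sqrt θ) with hB
  set F : ℝ → ℝ := fun θ => u / r * (stdGaussianCDF (A θ) - k * stdGaussianCDF (B θ)) with hF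
  set G : ℝ → ℝ := fun θ => if θ ≤ 0 then 0 else F θ with hG
  set g : ℝ → ℝ := fun θ => u / (σ * Real.sqrt (2 * Real.pi * θ)) *
      Real.exp (-(u - r * θ) ^ 2 / (2 * σ ^ 2 * θ)) with hg
  have hsqrt2pi : (0:ℝ) < Real.sqrt (2 * Real.pi) := Real.sqrt_pos.2 (by positivity)
  -- derivative of F for θ > 0
  have hderivF : ∀ θ : ℝ, 0 < θ → HasDerivAt F (g θ) θ := by
    intro θ hθ
    set s : ℝ := Real.sqrt θ with hs
    have hs0 : 0 < s := Real.sqrt_pos.2 hθ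
    have hss : s * s = θ := Real.mul_self_sqrt hθ.le
    have hders : HasDerivAt Real.sqrt (1 / (2 * s)) θ := Real.hasDerivAt_sqrt hθ.ne'
    have hden : HasDerivAt (fun t => σ * Real.sqrt t) (σ * (1 / (2 * s))) θ :=
      hders.const_mul σ
    have hden0 : σ * s ≠ 0 := by positivity
    have hnumA : HasDerivAt (fun t : ℝ => -u + r * t) r θ := by
      simpa using ((hasDerivAt_id θ).const_mul r).const_add (-u)
    have hnumB : HasDerivAt (fun t : ℝ => -u - r * t) (-r) θ := by
      simpa using (((hasDerivAt_id θ).const_mul r).const_sub (-u))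
    have hdA : HasDerivAt A
        ((r * (σ * s) - (-u + r * θ) * (σ * (1 / (2 * s)))) / (σ * s) ^ 2) θ :=
      hnumA.div hden hden0
    have hdB : HasDerivAt B
        ((-r * (σ * s) - (-u - r * θ) * (σ * (1 / (2 * s)))) / (σ * s) ^ 2) θ :=
      hnumB.div hden hden0
    set DA : ℝ := (r * (σ * s) - (-u + r * θ) * (σ * (1 / (2 * s)))) / (σ * s) ^ 2 with hDA
    set DB : ℝ := (-r * (σ * s) - (-u - r * θ) * (σ * (1 / (2 * s)))) / (σ * s) ^ 2 with hDB
    have hPA : HasDerivAt (fun t => stdGaussianCDF (A t)) (stdPhi (A θ) * DA) θ :=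
      (hasDerivAt_stdGaussianCDF (A θ)).comp θ hdA
    have hPB : HasDerivAt (fun t => stdGaussianCDF (B t)) (stdPhi (B θ) * DB) θ :=
      (hasDerivAt_stdGaussianCDF (B θ)).comp θ hdB
    have hFd : HasDerivAt F (u / r * (stdPhi (A θ) * DA - k * (stdPhi (B θ) * DB))) θ :=
      (hPA.sub (hPB.const_mul k)).const_mul (u / r)
    have hE : g θ = u / r * (stdPhi (A θ) * DA - k * (stdPhi (B θ) * DB)) := by
      set E : ℝ := Real.exp (-(u - r * θ) ^ 2 / (2 * σ ^ 2 * θ)) with hEdef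
      have c1 : stdPhi (A θ) = E / Real.sqrt (2 * Real.pi) := by
        rw [stdPhi, hEdef]
        congr 1
        rw [hA]
        simp only
        rw [div_pow, mul_pow, Real.sq_sqrt hθ.le]
        rw [← hss]
        field_simp
        ring
      have c2 : k * stdPhi (B θ) = E / Real.sqrt (2 * Real.pi) := by
        rw [stdPhi, hk, hEdef, mul_div_assoc', ← Real.exp_add]
        congr 1
        rw [hB]
        simp only
        rw [div_pow, mul_pow, Real.sq_sqrt hθ.le]
        rw [← hss]
        field_simp
        ring
      have c2' : k * (stdPhi (B θ) * DB) = E / Real.sqrt (2 * Real.pi) * DB := by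
        rw [← mul_assoc, c2]
      rw [c1, c2', hg]
      simp only
      rw [Real.sqrt_mul (by positivity : (0:ℝ) ≤ 2 * Real.pi), ← hs, ← hEdef, hDA, hDB, ← hss]
      have h2pi : Real.sqrt (2 * Real.pi) ≠ 0 := hsqrt2pi.ne'
      field_simp
      ring
    rw [hE]
    exact hFd
  -- A and B tend to -∞ as θ → 0⁺
  have hdenom_inv : Filter.Tendsto (fun θ => (σ * Real.sqrt θ)⁻¹) (nhdsWithin 0 (Set.Ioi 0))
      Filter.atTop := by
    have h1 : Filter.Tendsto (fun θ : ℝ => σ * Real.sqrt θ) (nhdsWithin 0 (Set.Ioi 0))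
        (nhdsWithin 0 (Set.Ioi 0)) := by
      rw [tendsto_nhdsWithin_iff]
      constructor
      · have : Filter.Tendsto (fun θ : ℝ => σ * Real.sqrt θ) (nhds 0) (nhds (σ * Real.sqrt 0)) := Continuous.tendsto (by fun_prop) 0
        simpa using this.mono_left nhdsWithin_le_nhds
      · filter_upwards [self_mem_nhdsWithin] with θ (hθ : θ ∈ Set.Ioi 0)
        have : 0 < θ := hθ
        exact Set.mem_Ioi.2 (by positivity)
    exact tendsto_inv_nhdsGT_zero.comp h1
  have htendA : Filter.Tendsto A (nhdsWithin 0 (Set.Ioi 0)) Filter.atBot := by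
    have hnum : Filter.Tendsto (fun θ : ℝ => -u + r * θ) (nhdsWithin 0 (Set.Ioi 0))
        (nhds (-u)) := by
      have h0 : Filter.Tendsto (fun θ : ℝ => -u + r * θ) (nhds 0) (nhds (-u + r * 0)) :=
        Continuous.tendsto (by fun_prop) 0
      simpa using h0.mono_left (nhdsWithin_le_nhds (s := Set.Ioi (0:ℝ)))
    have := hnum.neg_mul_atTop (by linarith : -u < 0) hdenom_inv
    refine this.congr fun θ => ?_
    simp [hA, div_eq_mul_inv]
  have htendB : Filter.Tendsto B (nhdsWithin 0 (Set.Ioi 0)) Filter.atBot := by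
    have hnum : Filter.Tendsto (fun θ : ℝ => -u - r * θ) (nhdsWithin 0 (Set.Ioi 0))
        (nhds (-u)) := by
      have h0 : Filter.Tendsto (fun θ : ℝ => -u - r * θ) (nhds 0) (nhds (-u - r * 0)) :=
        Continuous.tendsto (by fun_prop) 0
      simpa using h0.mono_left (nhdsWithin_le_nhds (s := Set.Ioi (0:ℝ)))
    have := hnum.neg_mul_atTop (by linarith : -u < 0) hdenom_inv
    refine this.congr fun θ => ?_
    simp [hB, div_eq_mul_inv]
  have htendF : Filter.Tendsto F (nhdsWithin 0 (Set.Ioi 0)) (nhds 0) := by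
    have h1 := stdGaussianCDF_tendsto_atBot.comp htendA
    have h2 := (stdGaussianCDF_tendsto_atBot.comp htendB).const_mul k
    have := (h1.sub h2).const_mul (u / r)
    simpa using this
  -- continuity of G on [0, T]
  have hGF : ∀ x : ℝ, 0 < x → ContinuousAt G x := by
    intro x hx
    have hFc : ContinuousAt F x := by
      have hden : ContinuousAt (fun t : ℝ => σ * Real.sqrt t) x :=
        (continuous_const.mul Real.continuous_sqrt).continuousAt
      have hden0 : σ * Real.sqrt x ≠ 0 := by
        have := Real.sqrt_pos.2 hx; positivity
      have hAc : ContinuousAt A x :=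
        ContinuousAt.div (by fun_prop) hden hden0
      have hBc : ContinuousAt B x :=
        ContinuousAt.div (by fun_prop) hden hden0
      exact ((continuous_stdGaussianCDF.continuousAt.comp hAc).sub
        ((continuous_stdGaussianCDF.continuousAt.comp hBc).const_mul k)).const_mul (u / r)
    refine hFc.congr ?_
    filter_upwards [eventually_gt_nhds hx] with t ht
    rw [hG]; simp [not_le.2 ht]
  have hG0 : ContinuousAt G 0 := by
    have hG00 : G 0 = 0 := by rw [hG]; simp
    have hleft : Filter.Tendsto G (nhdsWithin 0 (Set.Iic 0)) (nhds 0) := by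
      refine Filter.Tendsto.congr' ?_ tendsto_const_nhds
      filter_upwards [self_mem_nhdsWithin] with t (ht : t ≤ 0)
      rw [hG]; simp [ht]
    have hright : Filter.Tendsto G (nhdsWithin 0 (Set.Ioi 0)) (nhds 0) := by
      refine Filter.Tendsto.congr' ?_ htendF
      filter_upwards [self_mem_nhdsWithin] with t (ht : t ∈ Set.Ioi 0)
      rw [hG]; simp [not_le.2 (Set.mem_Ioi.1 ht)]
    have hsup := hleft.sup hright
    rw [nhdsLE_sup_nhdsGT (0:ℝ)] at hsup
    unfold ContinuousAt
    rw [hG00]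
    exact hsup
  have hcont : ContinuousOn G (Set.Icc 0 T) := by
    intro x hx
    rcases eq_or_lt_of_le hx.1 with h0 | hpos
    · exact (h0 ▸ hG0).continuousWithinAt
    · exact (hGF x hpos).continuousWithinAt
  -- integrability of g
  have hint : IntervalIntegrable g volume 0 T := by
    rw [intervalIntegrable_iff_integrableOn_Ioc_of_le hT.le]
    have hmeas : AEStronglyMeasurable g (volume.restrict (Set.Ioc 0 T)) := by
      apply Measurable.aestronglyMeasurable
      rw [hg]
      fun_prop
    have hbound : IntegrableOn
        (fun θ : ℝ => u / (σ * Real.sqrt (2 * Real.pi)) * θ ^ (-(1/2) : ℝ))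
        (Set.Ioc 0 T) volume := by
      have h1 : IntervalIntegrable (fun θ : ℝ => θ ^ (-(1/2) : ℝ)) volume 0 T :=
        intervalIntegral.intervalIntegrable_rpow' (by norm_num)
      have := (h1.const_mul (u / (σ * Real.sqrt (2 * Real.pi))))
      rwa [intervalIntegrable_iff_integrableOn_Ioc_of_le hT.le] at this
    refine Integrable.mono hbound hmeas ?_
    rw [ae_restrict_iff' measurableSet_Ioc]
    refine Filter.Eventually.of_forall fun θ hθ => ?_
    obtain ⟨hθ0, _⟩ := hθ
    have hsθ : 0 < Real.sqrt θ := Real.sqrt_pos.2 hθ0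
    have hgnn : 0 ≤ g θ := by
      rw [hg]
      have : 0 < Real.sqrt (2 * Real.pi * θ) := Real.sqrt_pos.2 (by positivity)
      positivity
    have hrw : u / (σ * Real.sqrt (2 * Real.pi)) * θ ^ (-(1/2) : ℝ)
        = u / (σ * Real.sqrt (2 * Real.pi) * Real.sqrt θ) := by
      rw [Real.rpow_neg hθ0.le, ← Real.sqrt_eq_rpow θ]
      field_simp
    have hE1 : Real.exp (-(u - r * θ) ^ 2 / (2 * σ ^ 2 * θ)) ≤ 1 := by
      rw [Real.exp_le_one_iff]
      have h1 : (0:ℝ) ≤ (u - r * θ) ^ 2 := sq_nonneg _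
      have h2 : (0:ℝ) < 2 * σ ^ 2 * θ := by positivity
      exact div_nonpos_of_nonpos_of_nonneg (by linarith) h2.le
    have hgle : g θ ≤ u / (σ * Real.sqrt (2 * Real.pi)) * θ ^ (-(1/2) : ℝ) := by
      rw [hrw, hg]
      simp only
      rw [Real.sqrt_mul (by positivity : (0:ℝ) ≤ 2 * Real.pi), ← mul_assoc]
      calc u / (σ * Real.sqrt (2 * Real.pi) * Real.sqrt θ)
            * Real.exp (-(u - r * θ) ^ 2 / (2 * σ ^ 2 * θ))
          ≤ u / (σ * Real.sqrt (2 * Real.pi) * Real.sqrt θ) * 1 := by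
            refine mul_le_mul_of_nonneg_left hE1 (by positivity)
        _ = u / (σ * Real.sqrt (2 * Real.pi) * Real.sqrt θ) := mul_one _
    rw [Real.norm_eq_abs, Real.norm_eq_abs, abs_of_nonneg hgnn,
      abs_of_nonneg (by positivity : (0:ℝ) ≤ u / (σ * Real.sqrt (2 * Real.pi)) * θ ^ (-(1/2):ℝ))]
    exact hgle
  -- assemble
  have hderivG : ∀ x ∈ Set.Ioo (0:ℝ) T, HasDerivWithinAt G (g x) (Set.Ioi x) x := by
    intro x hx
    have hFd := hderivF x hx.1
    have : HasDerivAt G (g x) x := by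
      refine hFd.congr_of_eventuallyEq ?_
      filter_upwards [eventually_gt_nhds hx.1] with t ht
      rw [hG]; simp [not_le.2 ht]
    exact this.hasDerivWithinAt
  have hFTC := intervalIntegral.integral_eq_sub_of_hasDeriv_right_of_le hT.le hcont hderivG hint
  have hGT : G T = F T := by rw [hG]; simp [not_le.2 hT]
  have hG00 : G 0 = 0 := by rw [hG]; simp
  rw [hg] at hFTC
  rw [hFTC, hGT, hG00, hF]
  simp [hA, hB]
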